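/- Let E and F be real normed vector spaces, let A, B > 0, and let G : E → F be differentiable such that ‖fderiv ℝ G z‖ ≤ A for every z ∈ E and ‖(fderiv ℝ G z) v‖ ≥ (1/B)·‖v‖ for every z ∈ E and v ∈ E. For z, z' ∈ E define the intrinsic image distance ℓ(z, z') as the infimum, over all continuously differentiable curves γ : ℝ → E with γ(0) = z and γ(1) = z', of ∫_{0}^{1} ‖deriv (G ∘ γ) t‖ dt. Then, with C = max(A, B), (1/C) · ‖z − z'‖ ≤ ℓ(z, z') ≤ C · ‖z − z'‖. -/

import Mathlib

open MeasureTheory intervalIntegral Set UniformSpace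

section aux
variable {E F : Type*} [NormedAddCommGroup E] [NormedSpace ℝ E]
    [NormedAddCommGroup F] [NormedSpace ℝ F]

lemma myDeriv_comp (G : E → F) (hG : Differentiable ℝ G) (γ : ℝ → E)
    (hγ : ContDiff ℝ 1 γ) (t : ℝ) :
    deriv (G ∘ γ) t = (fderiv ℝ G (γ t)) (deriv γ t) :=
  ((hG (γ t)).hasFDerivAt.comp_hasDerivAt t
    ((hγ.differentiable one_ne_zero) t).hasDerivAt).deriv

/-- the image speed is strongly measurable, via the completion -/
lemma mySpeed_meas (G : E → F) (hG : Differentiable ℝ G) (γ : ℝ → E)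
    (hγ : ContDiff ℝ 1 γ) :
    StronglyMeasurable (fun t => ‖deriv (G ∘ γ) t‖) := by
  have hdiff : ∀ t : ℝ, HasDerivAt (G ∘ γ) (deriv (G ∘ γ) t) t := by
    intro t
    have h := (hG (γ t)).hasFDerivAt.comp_hasDerivAt t
      ((hγ.differentiable one_ne_zero) t).hasDerivAt
    rwa [← h.deriv] at h
  have key : ∀ t : ℝ, ‖deriv (G ∘ γ) t‖ =
      ‖deriv ((Completion.toComplL : F →L[ℝ] Completion F) ∘ (G ∘ γ)) t‖ := by
    intro t
    have : HasDerivAt ((Completion.toComplL : F →L[ℝ] Completion F) ∘ (G ∘ γ))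
        ((Completion.toComplL : F →L[ℝ] Completion F) (deriv (G ∘ γ) t)) t :=
      (Completion.toComplL.hasFDerivAt).comp_hasDerivAt t (hdiff t)
    rw [this.deriv, Completion.coe_toComplL]
    exact (Completion.norm_coe _).symm
  simp_rw [key]
  exact (stronglyMeasurable_deriv _).norm

lemma mySpeed_upper (G : E → F) (hG : Differentiable ℝ G) (A : ℝ)
    (hupper : ∀ z : E, ‖fderiv ℝ G z‖ ≤ A) (γ : ℝ → E) (hγ : ContDiff ℝ 1 γ)
    (t : ℝ) : ‖deriv (G ∘ γ) t‖ ≤ A * ‖deriv γ t‖ := by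
  rw [myDeriv_comp G hG γ hγ]
  calc ‖(fderiv ℝ G (γ t)) (deriv γ t)‖
      ≤ ‖fderiv ℝ G (γ t)‖ * ‖deriv γ t‖ := (fderiv ℝ G (γ t)).le_opNorm _
    _ ≤ A * ‖deriv γ t‖ := mul_le_mul_of_nonneg_right (hupper (γ t)) (norm_nonneg _)

lemma mySpeed_integrable (G : E → F) (hG : Differentiable ℝ G) (A : ℝ) (hA : 0 < A)
    (hupper : ∀ z : E, ‖fderiv ℝ G z‖ ≤ A) (γ : ℝ → E) (hγ : ContDiff ℝ 1 γ) :
    IntervalIntegrable (fun t => ‖deriv (G ∘ γ) t‖) volume 0 1 := by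
  have hcont : Continuous (deriv γ) := hγ.continuous_deriv le_rfl
  have hmaj : IntervalIntegrable (fun t => A * ‖deriv γ t‖) volume 0 1 :=
    (continuous_const.mul hcont.norm).intervalIntegrable _ _
  rw [intervalIntegrable_iff] at hmaj ⊢
  refine MeasureTheory.Integrable.mono hmaj (mySpeed_meas G hG γ hγ).aestronglyMeasurable.restrict ?_
  refine Filter.Eventually.of_forall fun t => ?_
  rw [Real.norm_eq_abs, abs_of_nonneg (norm_nonneg _)]
  refine (mySpeed_upper G hG A hupper γ hγ t).trans (le_abs_self _)

/-- chord ≤ arc length -/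
lemma myChord_le (γ : ℝ → E) (hγ : ContDiff ℝ 1 γ) :
    ‖γ 1 - γ 0‖ ≤ ∫ t in (0:ℝ)..1, ‖deriv γ t‖ := by
  have hcont : Continuous (deriv γ) := hγ.continuous_deriv le_rfl
  have hB' : ∀ u : ℝ, HasDerivAt (fun u => ∫ t in (0:ℝ)..u, ‖deriv γ t‖) ‖deriv γ u‖ u :=
    fun u => intervalIntegral.integral_hasDerivAt_right
      (hcont.norm.intervalIntegrable _ _)
      hcont.norm.stronglyMeasurable.stronglyMeasurableAtFilter
      hcont.norm.continuousAt
  have key := image_norm_le_of_norm_deriv_right_le_deriv_boundary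
    (f := fun t => γ t - γ 0) (f' := deriv γ) (a := (0:ℝ)) (b := 1)
    ((hγ.continuous.sub continuous_const).continuousOn)
    (fun x _ => by
      simpa using (((hγ.differentiable one_ne_zero) x).hasDerivAt.sub_const (γ 0)).hasDerivWithinAt)
    (by simp) hB' (fun x _ => le_rfl)
  simpa using key (x := 1) (by norm_num)
end aux

/-- **Continuity bound of Appendix A (Eq. 5).** If the Jacobian of `G` is
uniformly bounded above in operator norm by `A` and bounded below by `1/B`,
then the intrinsic image distance `ℓ(z, z')` — the infimum, over continuously
differentiable curves `γ` joining `z` to `z'`, of the length of the image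
curve `G ∘ γ` — satisfies `(1/C)·‖z - z'‖ ≤ ℓ(z, z') ≤ C·‖z - z'‖` with
`C = max A B`. -/
theorem intrinsic_image_distance_bounds {E F : Type*}
    [NormedAddCommGroup E] [NormedSpace ℝ E]
    [NormedAddCommGroup F] [NormedSpace ℝ F]
    (G : E → F) (hG : Differentiable ℝ G) (A B : ℝ) (hA : 0 < A) (hB : 0 < B)
    (hupper : ∀ z : E, ‖fderiv ℝ G z‖ ≤ A)
    (hlower : ∀ z v : E, ‖(fderiv ℝ G z) v‖ ≥ (1 / B) * ‖v‖)
    (z z' : E) :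
    (1 / max A B) * ‖z - z'‖ ≤
        sInf {L : ℝ | ∃ γ : ℝ → E, ContDiff ℝ 1 γ ∧ γ 0 = z ∧ γ 1 = z' ∧
          L = ∫ t in (0:ℝ)..1, ‖deriv (G ∘ γ) t‖} ∧
      sInf {L : ℝ | ∃ γ : ℝ → E, ContDiff ℝ 1 γ ∧ γ 0 = z ∧ γ 1 = z' ∧
          L = ∫ t in (0:ℝ)..1, ‖deriv (G ∘ γ) t‖} ≤ max A B * ‖z - z'‖ := by
  set S := {L : ℝ | ∃ γ : ℝ → E, ContDiff ℝ 1 γ ∧ γ 0 = z ∧ γ 1 = z' ∧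
      L = ∫ t in (0:ℝ)..1, ‖deriv (G ∘ γ) t‖} with hS
  -- every element of S is at least (1 / max A B) * ‖z - z'‖
  have hmem_lb : ∀ L ∈ S, (1 / max A B) * ‖z - z'‖ ≤ L := by
    rintro L ⟨γ, hγ, h0, h1, rfl⟩
    have hcont : Continuous (deriv γ) := hγ.continuous_deriv le_rfl
    have step1 : (1 / B) * ‖z - z'‖ ≤ ∫ t in (0:ℝ)..1, ‖deriv (G ∘ γ) t‖ := by
      have chord : ‖z - z'‖ ≤ ∫ t in (0:ℝ)..1, ‖deriv γ t‖ := by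
        have := myChord_le γ hγ
        rwa [h0, h1, norm_sub_rev] at this
      have mono : ∫ t in (0:ℝ)..1, (1 / B) * ‖deriv γ t‖ ≤
          ∫ t in (0:ℝ)..1, ‖deriv (G ∘ γ) t‖ := by
        refine intervalIntegral.integral_mono_on (by norm_num)
          ((continuous_const.mul hcont.norm).intervalIntegrable _ _)
          (mySpeed_integrable G hG A hA hupper γ hγ) fun t _ => ?_
        rw [myDeriv_comp G hG γ hγ]
        exact hlower (γ t) (deriv γ t)
      calc (1 / B) * ‖z - z'‖ ≤ (1 / B) * ∫ t in (0:ℝ)..1, ‖deriv γ t‖ :=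
            mul_le_mul_of_nonneg_left chord (by positivity)
        _ = ∫ t in (0:ℝ)..1, (1 / B) * ‖deriv γ t‖ :=
            (intervalIntegral.integral_const_mul _ _).symm
        _ ≤ _ := mono
    refine le_trans ?_ step1
    have : (1 : ℝ) / max A B ≤ 1 / B :=
      one_div_le_one_div_of_le hB (le_max_right A B)
    exact mul_le_mul_of_nonneg_right this (norm_nonneg _)
  have hbdd : BddBelow S := ⟨(1 / max A B) * ‖z - z'‖, hmem_lb⟩
  -- the straight segment
  have hmem : (∫ t in (0:ℝ)..1, ‖deriv (G ∘ (fun t : ℝ => z + t • (z' - z))) t‖) ∈ S := by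
    refine ⟨fun t : ℝ => z + t • (z' - z), ?_, by simp, by simp, rfl⟩
    exact contDiff_const.add (contDiff_id.smul contDiff_const)
  constructor
  · exact le_csInf ⟨_, hmem⟩ hmem_lb
  · refine (csInf_le hbdd hmem).trans ?_
    set γ₀ : ℝ → E := fun t : ℝ => z + t • (z' - z) with hγ₀
    have hγ₀c : ContDiff ℝ 1 γ₀ := contDiff_const.add (contDiff_id.smul contDiff_const)
    have hderiv : ∀ t : ℝ, deriv γ₀ t = z' - z := by
      intro t
      have : HasDerivAt γ₀ (z' - z) t := by
        simpa [hγ₀] using ((hasDerivAt_id t).smul_const (z' - z)).const_add z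
      exact this.deriv
    have hbound : ∀ t ∈ Icc (0:ℝ) 1, ‖deriv (G ∘ γ₀) t‖ ≤ A * ‖z - z'‖ := by
      intro t _
      have := mySpeed_upper G hG A hupper γ₀ hγ₀c t
      rwa [hderiv t, norm_sub_rev] at this
    calc (∫ t in (0:ℝ)..1, ‖deriv (G ∘ γ₀) t‖)
        ≤ ∫ _t in (0:ℝ)..1, A * ‖z - z'‖ :=
          intervalIntegral.integral_mono_on (by norm_num)
            (mySpeed_integrable G hG A hA hupper γ₀ hγ₀c)
            (intervalIntegrable_const) hbound
      _ = A * ‖z - z'‖ := by simp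
      _ ≤ max A B * ‖z - z'‖ :=
          mul_le_mul_of_nonneg_right (le_max_left A B) (norm_nonneg _)
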